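/- Let F be a finite metric space with at least two points and no focal points. Then: (a) for every 2-covering 𝒰 of F with Δ(𝒰) < Δ(F) there is a unique s ∈ (0,∞) such that H^s_𝒰(F) = Δ(F)^s; and (b) there is a unique s₀ ∈ (0,∞) such that H^{s₀}(F) = Δ(F)^{s₀}. -/
import Mathlib


open Metric

namespace FinDim

variable {X : Type*} [MetricSpace X]

/-- `ν_F(a)`: the distance from `a` to a nearest other point of `F`. -/
noncomputable def nu (F : Finset X) (a : X) : ℝ :=
  sInf {r : ℝ | ∃ x ∈ F, x ≠ a ∧ r = dist a x}

/-- `δ(F)`: the separation of `F`, the minimum distance between distinct points. -/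
noncomputable def sep (F : Finset X) : ℝ :=
  sInf {r : ℝ | ∃ x ∈ F, ∃ y ∈ F, x ≠ y ∧ r = dist x y}

/-- A 2-covering of `F`: a family of subsets of `F` covering `F`,
each member having at least two elements. -/
def IsTwoCover (F : Finset X) (U : Finset (Finset X)) : Prop :=
  (∀ V ∈ U, V ⊆ F) ∧ (∀ V ∈ U, 2 ≤ V.card) ∧ ∀ a ∈ F, ∃ V ∈ U, a ∈ V

/-- `Δ(𝒰)`: maximum diameter of the members of the family `𝒰`. -/
noncomputable def coverDiam (U : Finset (Finset X)) : ℝ :=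
  sSup {r : ℝ | ∃ V ∈ U, r = Metric.diam (V : Set X)}

/-- `∇(F)`: the covering diameter of `F`. -/
noncomputable def nablaF (F : Finset X) : ℝ :=
  sInf {r : ℝ | ∃ U : Finset (Finset X), IsTwoCover F U ∧ r = coverDiam U}

/-- `a` is a focal point of `F`. -/
def IsFocal (F : Finset X) (a : X) : Prop :=
  a ∈ F ∧ ∀ x ∈ F, x ≠ a → dist a x = Metric.diam (F : Set X)

/-- `H^s_𝒰(F) = Σ_{U ∈ 𝒰} Δ(U)^s`. -/
noncomputable def Hcov (U : Finset (Finset X)) (s : ℝ) : ℝ :=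
  ∑ V ∈ U, Metric.diam (V : Set X) ^ s

/-- `H^s(F)`: minimum of `H^s_𝒰(F)` over 2-coverings `𝒰` with `Δ(𝒰) = ∇(F)`. -/
noncomputable def HH (F : Finset X) (s : ℝ) : ℝ :=
  sInf {h : ℝ | ∃ U : Finset (Finset X),
    IsTwoCover F U ∧ coverDiam U = nablaF F ∧ h = Hcov U s}

/-- The finite Hausdorff dimension: the unique `s₀ ∈ (0,∞)` with
`H^{s₀}(F) = Δ(F)^{s₀}` (when `F` has no focal points). -/
noncomputable def dimfH (F : Finset X) : ℝ :=
  sInf {s : ℝ | 0 < s ∧ HH F s = Metric.diam (F : Set X) ^ s}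

/-- `T_{∇(F)}(F)`: the minimal cardinality of a 2-covering `𝒰` with `Δ(𝒰) = ∇(F)`. -/
noncomputable def Tmin (F : Finset X) : ℕ :=
  sInf {n : ℕ | ∃ U : Finset (Finset X),
    IsTwoCover F U ∧ coverDiam U = nablaF F ∧ U.card = n}

/-- The finite box dimension `dim_fB(F) = ln T_{∇(F)}(F) / ln (Δ(F)/∇(F))`. -/
noncomputable def dimfB (F : Finset X) : ℝ :=
  Real.log (Tmin F) / Real.log (Metric.diam (F : Set X) / nablaF F)

/-- `ν_A(x)` for a subset `A` of a metric space. -/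
noncomputable def nuSet {Z : Type*} [MetricSpace Z] (A : Set Z) (x : Z) : ℝ :=
  sInf {r : ℝ | ∃ y ∈ A, y ≠ x ∧ r = dist x y}

/-- `∇(A) = sup {ν_A(x) : x ∈ A}` for a subset `A` of a metric space. -/
noncomputable def nablaSet {Z : Type*} [MetricSpace Z] (A : Set Z) : ℝ :=
  sSup {r : ℝ | ∃ x ∈ A, r = nuSet A x}

end FinDim


section StmtAux

open FinDim Filter Topology

variable {X : Type*} [MetricSpace X]

namespace StmtAux

/-- Core analytic lemma. -/
lemma key {ι : Type*} (T : Finset ι) (g : ι → ℝ) (Δ : ℝ) (hΔ : 0 < Δ)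
    (hg : ∀ i ∈ T, 0 < g i) (hlt : ∀ i ∈ T, g i < Δ) (hcard : 2 ≤ T.card) :
    ∃ s₀ : ℝ, 0 < s₀ ∧ (∑ i ∈ T, g i ^ s₀ = Δ ^ s₀) ∧
      ∀ t : ℝ, (s₀ < t → ∑ i ∈ T, g i ^ t < Δ ^ t) ∧
               (t < s₀ → Δ ^ t < ∑ i ∈ T, g i ^ t) := by
  have hT : T.Nonempty := Finset.card_pos.mp (by omega)
  set f : ℝ → ℝ := fun s => ∑ i ∈ T, (g i / Δ) ^ s with hfdef
  have hr : ∀ i ∈ T, 0 < g i / Δ := fun i hi => div_pos (hg i hi) hΔ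
  have hr1 : ∀ i ∈ T, g i / Δ < 1 := fun i hi => (div_lt_one hΔ).mpr (hlt i hi)
  have hanti : StrictAnti f := by
    intro s t hst
    exact Finset.sum_lt_sum_of_nonempty hT fun i hi =>
      Real.rpow_lt_rpow_of_exponent_gt (hr i hi) (hr1 i hi) hst
  have hcont : Continuous f := by
    apply continuous_finset_sum
    intro i hi
    exact (Real.continuous_exp.comp (continuous_const.mul continuous_id)).congr
      fun s => (Real.rpow_def_of_pos (hr i hi) s).symm
  have hf0 : f 0 = T.card := by simp [hfdef]
  have hsum : ∀ s : ℝ, ∑ i ∈ T, g i ^ s = f s * Δ ^ s := by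
    intro s
    rw [hfdef, Finset.sum_mul]
    refine Finset.sum_congr rfl fun i hi => ?_
    rw [Real.div_rpow (hg i hi).le hΔ.le,
      div_mul_cancel₀ _ (ne_of_gt (Real.rpow_pos_of_pos hΔ s))]
  have hΔs : ∀ s : ℝ, (0:ℝ) < Δ ^ s := fun s => Real.rpow_pos_of_pos hΔ s
  have htend : Filter.Tendsto f Filter.atTop (nhds 0) := by
    have h := tendsto_finset_sum T fun i (hi : i ∈ T) =>
      tendsto_rpow_atTop_of_base_lt_one (g i / Δ) (by linarith [hr i hi]) (hr1 i hi)
    simpa using h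
  obtain ⟨b, hb0, hfb⟩ : ∃ b : ℝ, 0 < b ∧ f b < 1 := by
    have h1 := htend.eventually_lt_const (by norm_num : (0:ℝ) < 1)
    obtain ⟨b, hb1, hb2⟩ := (h1.and (Filter.eventually_gt_atTop (0:ℝ))).exists
    exact ⟨b, hb2, hb1⟩
  have h1mem : (1:ℝ) ∈ Set.Icc (f b) (f 0) := by
    constructor
    · exact hfb.le
    · rw [hf0]; exact_mod_cast Nat.one_le_of_lt hcard
  obtain ⟨s₀, hs₀mem, hfs₀⟩ := intermediate_value_Icc' hb0.le hcont.continuousOn h1mem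
  have hs₀pos : 0 < s₀ := by
    rcases lt_or_eq_of_le hs₀mem.1 with h | h
    · exact h
    · exfalso
      rw [← h] at hfs₀
      rw [hf0] at hfs₀
      have : (2:ℝ) ≤ (T.card : ℝ) := by exact_mod_cast hcard
      linarith
  refine ⟨s₀, hs₀pos, ?_, ?_⟩
  · rw [hsum, hfs₀, one_mul]
  · intro t
    constructor
    · intro ht
      rw [hsum]
      have : f t < 1 := hfs₀ ▸ hanti ht
      nlinarith [hΔs t]
    · intro ht
      rw [hsum]
      have : 1 < f t := hfs₀ ▸ hanti ht
      nlinarith [hΔs t]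

lemma diam_pos_of_card (V : Finset X) (h : 2 ≤ V.card) : 0 < Metric.diam (V : Set X) := by
  obtain ⟨a, ha, b, hb, hab⟩ := Finset.one_lt_card.mp h
  calc (0:ℝ) < dist a b := dist_pos.mpr hab
    _ ≤ _ := Metric.dist_le_diam_of_mem V.finite_toSet.isBounded ha hb

lemma coverDiam_set_eq (U : Finset (Finset X)) :
    {r : ℝ | ∃ V ∈ U, r = Metric.diam (V : Set X)}
      = (fun V : Finset X => Metric.diam (V : Set X)) '' ↑U := by
  ext r; simp [eq_comm]

lemma le_coverDiam {U : Finset (Finset X)} {V : Finset X} (hV : V ∈ U) :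
    Metric.diam (V : Set X) ≤ coverDiam U := by
  rw [coverDiam, coverDiam_set_eq]
  exact le_csSup ((U.finite_toSet.image _).bddAbove) ⟨V, hV, rfl⟩

lemma coverDiam_attained {U : Finset (Finset X)} (hU : U.Nonempty) :
    ∃ V ∈ U, coverDiam U = Metric.diam (V : Set X) := by
  have hmem : coverDiam U ∈ {r : ℝ | ∃ V ∈ U, r = Metric.diam (V : Set X)} := by
    rw [coverDiam]
    apply Set.Nonempty.csSup_mem
    · obtain ⟨V, hV⟩ := hU; exact ⟨_, V, hV, rfl⟩
    · rw [coverDiam_set_eq]; exact U.finite_toSet.image _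
  exact hmem

lemma covers_finite (F : Finset X) :
    {U : Finset (Finset X) | IsTwoCover F U}.Finite := by
  apply Set.Finite.subset F.powerset.powerset.finite_toSet
  intro U hU
  simp only [Finset.mem_coe, Finset.mem_powerset]
  intro V hV
  rw [Finset.mem_powerset]
  exact hU.1 V hV

lemma nabla_set_eq (F : Finset X) :
    {r : ℝ | ∃ U : Finset (Finset X), IsTwoCover F U ∧ r = coverDiam U}
      = coverDiam '' {U : Finset (Finset X) | IsTwoCover F U} := by
  ext r
  constructor
  · rintro ⟨U, h1, h2⟩; exact ⟨U, h1, h2.symm⟩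
  · rintro ⟨U, h1, h2⟩; exact ⟨U, h1, h2.symm⟩

lemma nablaF_le (F : Finset X) {U : Finset (Finset X)} (h : IsTwoCover F U) :
    nablaF F ≤ coverDiam U := by
  rw [nablaF, nabla_set_eq]
  exact csInf_le ((covers_finite F).image _).bddBelow ⟨U, h, rfl⟩

lemma nablaF_attained (F : Finset X) (h : ∃ U : Finset (Finset X), IsTwoCover F U) :
    ∃ U : Finset (Finset X), IsTwoCover F U ∧ coverDiam U = nablaF F := by
  have hmem : nablaF F ∈
      {r : ℝ | ∃ U : Finset (Finset X), IsTwoCover F U ∧ r = coverDiam U} := by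
    rw [nablaF]
    apply Set.Nonempty.csInf_mem
    · obtain ⟨U, hU⟩ := h; exact ⟨_, U, hU, rfl⟩
    · rw [nabla_set_eq]; exact (covers_finite F).image _
  obtain ⟨U, hU, hU2⟩ := hmem
  exact ⟨U, hU, hU2.symm⟩

lemma HH_set_eq (F : Finset X) (s : ℝ) :
    {h : ℝ | ∃ U : Finset (Finset X),
        IsTwoCover F U ∧ coverDiam U = nablaF F ∧ h = Hcov U s}
      = (fun U => Hcov U s) ''
        {U : Finset (Finset X) | IsTwoCover F U ∧ coverDiam U = nablaF F} := by
  ext r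
  constructor
  · rintro ⟨U, h1, h2, h3⟩; exact ⟨U, ⟨h1, h2⟩, h3.symm⟩
  · rintro ⟨U, ⟨h1, h2⟩, h3⟩; exact ⟨U, h1, h2, h3.symm⟩

lemma CS_finite (F : Finset X) :
    {U : Finset (Finset X) | IsTwoCover F U ∧ coverDiam U = nablaF F}.Finite :=
  (covers_finite F).subset fun _ h => h.1

lemma HH_le (F : Finset X) (s : ℝ) {U : Finset (Finset X)}
    (h1 : IsTwoCover F U) (h2 : coverDiam U = nablaF F) : HH F s ≤ Hcov U s := by
  rw [HH, HH_set_eq]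
  exact csInf_le (((CS_finite F).image _).bddBelow) ⟨U, ⟨h1, h2⟩, rfl⟩

lemma HH_attained (F : Finset X) (s : ℝ)
    (h : ∃ U : Finset (Finset X), IsTwoCover F U ∧ coverDiam U = nablaF F) :
    ∃ U : Finset (Finset X),
      (IsTwoCover F U ∧ coverDiam U = nablaF F) ∧ HH F s = Hcov U s := by
  have hmem : HH F s ∈ {h : ℝ | ∃ U : Finset (Finset X),
      IsTwoCover F U ∧ coverDiam U = nablaF F ∧ h = Hcov U s} := by
    rw [HH]
    apply Set.Nonempty.csInf_mem
    · obtain ⟨U, hU1, hU2⟩ := h; exact ⟨_, U, hU1, hU2, rfl⟩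
    · rw [HH_set_eq]; exact ((CS_finite F).image _)
  obtain ⟨U, h1, h2, h3⟩ := hmem
  exact ⟨U, ⟨h1, h2⟩, h3⟩

/-- A 2-cover with small diameter, from absence of focal points. -/
lemma exists_small_cover (F : Finset X) (hF : 2 ≤ F.card)
    (hfoc : ∀ a : X, ¬ IsFocal F a) :
    ∃ W : Finset (Finset X), IsTwoCover F W ∧ coverDiam W < Metric.diam (F : Set X) := by
  classical
  have hex : ∀ a ∈ F, ∃ x ∈ F, x ≠ a ∧ dist a x < Metric.diam (F : Set X) := by
    intro a ha
    have h := hfoc a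
    rw [IsFocal] at h
    push_neg at h
    obtain ⟨x, hx, hxa, hne⟩ := h ha
    exact ⟨x, hx, hxa, lt_of_le_of_ne
      (Metric.dist_le_diam_of_mem F.finite_toSet.isBounded ha hx) hne⟩
  choose p hp1 hp2 hp3 using hex
  set W : Finset (Finset X) :=
    F.attach.image (fun a => ({a.1, p a.1 a.2} : Finset X)) with hW
  have hWc : IsTwoCover F W := by
    refine ⟨?_, ?_, ?_⟩
    · intro V hV
      simp only [hW, Finset.mem_image, Finset.mem_attach, true_and] at hV
      obtain ⟨a, rfl⟩ := hV
      intro x hx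
      simp only [Finset.mem_insert, Finset.mem_singleton] at hx
      rcases hx with rfl | rfl
      · exact a.2
      · exact hp1 a.1 a.2
    · intro V hV
      simp only [hW, Finset.mem_image, Finset.mem_attach, true_and] at hV
      obtain ⟨a, rfl⟩ := hV
      rw [Finset.card_pair (Ne.symm (hp2 a.1 a.2))]
    · intro a ha
      refine ⟨{a, p a ha}, ?_, Finset.mem_insert_self _ _⟩
      simp only [hW, Finset.mem_image, Finset.mem_attach, true_and]
      exact ⟨⟨a, ha⟩, rfl⟩
  refine ⟨W, hWc, ?_⟩
  have hWne : W.Nonempty := by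
    have hFne : F.Nonempty := Finset.card_pos.mp (by omega)
    obtain ⟨a, ha⟩ := hFne
    refine ⟨{a, p a ha}, ?_⟩
    simp only [hW, Finset.mem_image, Finset.mem_attach, true_and]
    exact ⟨⟨a, ha⟩, rfl⟩
  obtain ⟨V, hV, hVd⟩ := coverDiam_attained hWne
  rw [hVd]
  simp only [hW, Finset.mem_image, Finset.mem_attach, true_and] at hV
  obtain ⟨a, rfl⟩ := hV
  have hcoe : (({a.1, p a.1 a.2} : Finset X) : Set X) = {a.1, p a.1 a.2} := by simp
  rw [hcoe, Metric.diam_pair]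
  exact hp3 a.1 a.2

/-- Part (a) with extra monotonicity info. -/
lemma solA (F : Finset X) (hF : 2 ≤ F.card) (U : Finset (Finset X))
    (hc : IsTwoCover F U) (hd : coverDiam U < Metric.diam (F : Set X)) :
    ∃ s₀ : ℝ, 0 < s₀ ∧ Hcov U s₀ = Metric.diam (F : Set X) ^ s₀ ∧
      ∀ t : ℝ, (s₀ < t → Hcov U t < Metric.diam (F : Set X) ^ t) ∧
               (t < s₀ → Metric.diam (F : Set X) ^ t < Hcov U t) := by
  have hΔ : 0 < Metric.diam (F : Set X) := diam_pos_of_card F hF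
  have hUne : U.Nonempty := by
    have hFne : F.Nonempty := Finset.card_pos.mp (by omega)
    obtain ⟨a, ha⟩ := hFne
    obtain ⟨V, hV, _⟩ := hc.2.2 a ha
    exact ⟨V, hV⟩
  have hUcard : 2 ≤ U.card := by
    by_contra h
    push_neg at h
    have hc1 : U.card = 1 := by
      have := Finset.card_pos.mpr hUne
      omega
    obtain ⟨V, hVeq⟩ := Finset.card_eq_one.mp hc1
    have hVF : V = F := by
      apply Finset.Subset.antisymm (hc.1 V (hVeq ▸ Finset.mem_singleton_self V))
      intro a ha
      obtain ⟨V', hV', haV'⟩ := hc.2.2 a ha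
      rw [hVeq, Finset.mem_singleton] at hV'
      exact hV' ▸ haV'
    obtain ⟨V'', hV'', hVd⟩ := coverDiam_attained hUne
    rw [hVeq, Finset.mem_singleton] at hV''
    rw [hVd, hV'', hVF] at hd
    exact lt_irrefl _ hd
  exact key U (fun V => Metric.diam (V : Set X)) (Metric.diam (F : Set X)) hΔ
    (fun V hV => diam_pos_of_card V (hc.2.1 V hV))
    (fun V hV => lt_of_le_of_lt (le_coverDiam hV) hd) hUcard

end StmtAux

end StmtAux

open FinDim in
/-- Existence and uniqueness of the solution of `H^s_𝒰(F) = Δ(F)^s` and of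
`H^s(F) = Δ(F)^s`, for `F` without focal points. -/
theorem stmt3 {X : Type*} [MetricSpace X] (F : Finset X) (hF : 2 ≤ F.card)
    (hfoc : ∀ a, ¬ IsFocal F a) :
    (∀ U : Finset (Finset X), IsTwoCover F U → coverDiam U < Metric.diam (F : Set X) →
      ∃! s : ℝ, 0 < s ∧ Hcov U s = Metric.diam (F : Set X) ^ s) ∧
    (∃! s : ℝ, 0 < s ∧ HH F s = Metric.diam (F : Set X) ^ s) := by
  classical
  set Δ := Metric.diam (F : Set X) with hΔdef
  constructor
  · -- part (a)
    intro U hc hd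
    obtain ⟨s₀, hpos, heq, hmono⟩ := StmtAux.solA F hF U hc hd
    refine ⟨s₀, ⟨hpos, heq⟩, ?_⟩
    rintro t ⟨htpos, hteq⟩
    rcases lt_trichotomy t s₀ with h | h | h
    · exact absurd hteq (ne_of_gt ((hmono t).2 h))
    · exact h
    · exact absurd hteq (ne_of_lt ((hmono t).1 h))
  · -- part (b)
    obtain ⟨W, hWc, hWd⟩ := StmtAux.exists_small_cover F hF hfoc
    have hnlt : nablaF F < Δ := lt_of_le_of_lt (StmtAux.nablaF_le F hWc) hWd
    have hexC : ∃ U : Finset (Finset X), IsTwoCover F U ∧ coverDiam U = nablaF F :=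
      StmtAux.nablaF_attained F ⟨W, hWc⟩
    set CS : Set (Finset (Finset X)) :=
      {U | IsTwoCover F U ∧ coverDiam U = nablaF F} with hCSdef
    have hCSfin : CS.Finite := StmtAux.CS_finite F
    have hCSne : CS.Nonempty := hexC
    have hkey : ∀ U ∈ CS, ∃ s₀ : ℝ, 0 < s₀ ∧ Hcov U s₀ = Δ ^ s₀ ∧
        ∀ t : ℝ, (s₀ < t → Hcov U t < Δ ^ t) ∧ (t < s₀ → Δ ^ t < Hcov U t) := by
      rintro U ⟨h1, h2⟩
      exact StmtAux.solA F hF U h1 (h2 ▸ hnlt)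
    set σ : Finset (Finset X) → ℝ :=
      fun U => if h : U ∈ CS then Classical.choose (hkey U h) else 0 with hσdef
    have hσspec : ∀ U (hU : U ∈ CS), 0 < σ U ∧ Hcov U (σ U) = Δ ^ (σ U) ∧
        ∀ t : ℝ, (σ U < t → Hcov U t < Δ ^ t) ∧ (t < σ U → Δ ^ t < Hcov U t) := by
      intro U hU
      have : σ U = Classical.choose (hkey U hU) := dif_pos hU
      rw [this]
      exact Classical.choose_spec (hkey U hU)
    -- take the minimum of σ over CS
    have hSSfin : (σ '' CS).Finite := hCSfin.image _
    have hSSne : (σ '' CS).Nonempty := hCSne.image _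
    obtain ⟨V, hVCS, hVmin⟩ : ∃ V ∈ CS, sInf (σ '' CS) = σ V :=
      (hSSne.csInf_mem hSSfin).imp fun V h => ⟨h.1, h.2.symm⟩
    have hmin : ∀ U ∈ CS, σ V ≤ σ U := by
      intro U hU
      rw [← hVmin]
      exact csInf_le hSSfin.bddBelow ⟨U, hU, rfl⟩
    set s₀ := σ V with hs₀def
    have hs₀pos : 0 < s₀ := (hσspec V hVCS).1
    have hs₀eq : HH F s₀ = Δ ^ s₀ := by
      apply le_antisymm
      · calc HH F s₀ ≤ Hcov V s₀ := StmtAux.HH_le F s₀ hVCS.1 hVCS.2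
          _ = Δ ^ s₀ := (hσspec V hVCS).2.1
      · obtain ⟨U, hUCS, hUeq⟩ := StmtAux.HH_attained F s₀ hexC
        rw [hUeq]
        rcases eq_or_lt_of_le (hmin U hUCS) with h | h
        · rw [h]
          exact le_of_eq (hσspec U hUCS).2.1.symm
        · exact le_of_lt (((hσspec U hUCS).2 ).2 s₀ |>.2 h)
    refine ⟨s₀, ⟨hs₀pos, hs₀eq⟩, ?_⟩
    rintro t ⟨htpos, hteq⟩
    by_contra hne
    -- general claim: no two distinct solutions
    have claim : ∀ u v : ℝ, 0 < u → u < v → HH F u = Δ ^ u → HH F v = Δ ^ v → False := by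
      intro u v hu huv hHu hHv
      obtain ⟨U, hUCS, hUeq⟩ := StmtAux.HH_attained F u hexC
      have hUsol : Hcov U u = Δ ^ u := by rw [← hUeq, hHu]
      have huU : u = σ U := by
        rcases lt_trichotomy u (σ U) with h | h | h
        · exact absurd hUsol (ne_of_gt (((hσspec U hUCS).2.2 u).2 h))
        · exact h
        · exact absurd hUsol (ne_of_lt (((hσspec U hUCS).2.2 u).1 h))
      have hlt2 : Hcov U v < Δ ^ v := ((hσspec U hUCS).2.2 v).1 (huU ▸ huv)
      have : HH F v ≤ Hcov U v := StmtAux.HH_le F v hUCS.1 hUCS.2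
      rw [hHv] at this
      linarith
    rcases lt_or_gt_of_ne hne with h | h
    · exact claim t s₀ htpos h hteq hs₀eq
    · exact claim s₀ t hs₀pos h hs₀eq hteq
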